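/- Let H ∈ F₂^{m×n} be the vertical stack of H_s and H_d, where the rows of H_d have pairwise disjoint supports, and suppose H is (δ,γ)-expanding. Then every x ∈ ker H_s is at the bottom of a linear energy well: for every Δx ∈ F₂ⁿ with |Δx| ≤ δn, the energy increase satisfies |H(x ⊕ Δx)| − |Hx| ≥ (γ − 2)·|Δx|. -/

import Mathlib

/-- A binary matrix `H` (rows indexed by a finite type `ι`) is
`(δ,γ)`-expanding if every `x ∈ F₂ⁿ` with Hamming weight `|x| ≤ δn`
satisfies `|Hx| ≥ γ|x|`. -/
def IsExpanding {ι : Type*} [Fintype ι] {n : ℕ}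
    (H : Matrix ι (Fin n) (ZMod 2)) (δ γ : ℝ) : Prop :=
  ∀ x : Fin n → ZMod 2, (hammingNorm x : ℝ) ≤ δ * n →
    γ * (hammingNorm x : ℝ) ≤ (hammingNorm (H.mulVec x) : ℝ)

private lemma ham_sum_elim {m₁ m₂ : ℕ} (f : Fin m₁ → ZMod 2) (g : Fin m₂ → ZMod 2) :
    hammingNorm (Sum.elim f g) = hammingNorm f + hammingNorm g := by
  classical
  rw [hammingNorm, ← Finset.card_toLeft_add_card_toRight]
  have h1 : (Finset.univ.filter fun i : Fin m₁ ⊕ Fin m₂ => Sum.elim f g i ≠ 0).toLeft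
      = Finset.univ.filter fun i => f i ≠ 0 := by
    ext i; simp
  have h2 : (Finset.univ.filter fun i : Fin m₁ ⊕ Fin m₂ => Sum.elim f g i ≠ 0).toRight
      = Finset.univ.filter fun i => g i ≠ 0 := by
    ext i; simp
  rw [h1, h2]; rfl

private lemma ham_rev_triangle {m : ℕ} (u v : Fin m → ZMod 2) :
    hammingNorm u ≤ hammingNorm (u + v) + hammingNorm v := by
  calc hammingNorm u = hammingDist u 0 := (hammingDist_zero_right u).symm
    _ ≤ hammingDist u (u + v) + hammingDist (u + v) 0 := hammingDist_triangle _ _ _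
    _ = hammingNorm v + hammingNorm (u + v) := by
        rw [hammingDist_zero_right, hammingDist_eq_hammingNorm]
        congr 1
        have : u - (u + v) = v := by
          ext i
          have key : ∀ a b : ZMod 2, a - (a + b) = b := by decide
          exact key _ _
        rw [neg_add_cancel_left]
    _ = hammingNorm (u + v) + hammingNorm v := by ring

private lemma ham_mulVec_le {m₂ n : ℕ} (Hd : Matrix (Fin m₂) (Fin n) (ZMod 2))
    (hdisj : ∀ i k : Fin m₂, i ≠ k →
      Disjoint (Finset.univ.filter (fun j : Fin n => Hd i j ≠ 0))
        (Finset.univ.filter (fun j : Fin n => Hd k j ≠ 0)))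
    (v : Fin n → ZMod 2) : hammingNorm (Hd.mulVec v) ≤ hammingNorm v := by
  classical
  have hex : ∀ i : Fin m₂, Hd.mulVec v i ≠ 0 → ∃ j, Hd i j ≠ 0 ∧ v j ≠ 0 := by
    intro i hi
    by_contra h
    push_neg at h
    apply hi
    simp only [Matrix.mulVec, dotProduct]
    apply Finset.sum_eq_zero
    intro j _
    rcases eq_or_ne (Hd i j) 0 with h0 | h0
    · simp [h0]
    · simp [h j h0]
  by_cases hv : v = 0
  · simp [hv]
  · obtain ⟨j₀, hj₀⟩ : ∃ j, v j ≠ 0 := by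
      by_contra h
      push_neg at h
      exact hv (funext fun j => h j)
    rw [hammingNorm, hammingNorm]
    apply Finset.card_le_card_of_injOn
      (fun i => if h : Hd.mulVec v i ≠ 0 then Classical.choose (hex i h) else j₀)
    · intro i hi
      simp only [Finset.mem_coe, Finset.mem_filter, Finset.mem_univ, true_and] at hi ⊢
      rw [dif_pos hi]
      exact (Classical.choose_spec (hex i hi)).2
    · intro i hi i' hi' hii'
      simp only [Finset.mem_coe, Finset.mem_filter, Finset.mem_univ, true_and] at hi hi'
      by_contra hne
      simp only [dif_pos hi, dif_pos hi'] at hii'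
      have h1 := (Classical.choose_spec (hex i hi)).1
      have h2 := (Classical.choose_spec (hex i' hi')).1
      have := hdisj i i' hne
      rw [Finset.disjoint_left] at this
      exact this (Finset.mem_filter.2 ⟨Finset.mem_univ _, h1⟩)
        (Finset.mem_filter.2 ⟨Finset.mem_univ _, by rw [hii']; exact h2⟩)

/-- let `H` be the vertical stack of `H_s` and `H_d`, where the
rows of `H_d` have pairwise disjoint supports, and suppose `H` is
`(δ,γ)`-expanding. Then every `x ∈ ker H_s` is at the bottom of a linear
energy well: for every `Δx` with `|Δx| ≤ δn`,
`|H(x ⊕ Δx)| − |Hx| ≥ (γ − 2)·|Δx|`. -/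
theorem kernel_states_linear_energy_well {m₁ m₂ n : ℕ}
    (Hs : Matrix (Fin m₁) (Fin n) (ZMod 2)) (Hd : Matrix (Fin m₂) (Fin n) (ZMod 2))
    (δ γ : ℝ) (hδ : 0 < δ) (hγ : 0 < γ)
    (hdisj : ∀ i k : Fin m₂, i ≠ k →
      Disjoint (Finset.univ.filter (fun j : Fin n => Hd i j ≠ 0))
        (Finset.univ.filter (fun j : Fin n => Hd k j ≠ 0)))
    (hexp : IsExpanding (Matrix.fromRows Hs Hd) δ γ)
    (x : Fin n → ZMod 2) (hx : Hs.mulVec x = 0) :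
    ∀ Δx : Fin n → ZMod 2, (hammingNorm Δx : ℝ) ≤ δ * n →
      (γ - 2) * (hammingNorm Δx : ℝ) ≤
        (hammingNorm ((Matrix.fromRows Hs Hd).mulVec (x + Δx)) : ℝ) -
          (hammingNorm ((Matrix.fromRows Hs Hd).mulVec x) : ℝ) := by
  intro Δx hΔx
  have hHx : (Matrix.fromRows Hs Hd).mulVec x = Sum.elim (Hs.mulVec x) (Hd.mulVec x) :=
    Matrix.fromRows_mulVec _ _ _
  have hBx : hammingNorm ((Matrix.fromRows Hs Hd).mulVec x) = hammingNorm (Hd.mulVec x) := by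
    rw [hHx, ham_sum_elim, hx, hammingNorm_zero, zero_add]
  have hAdd : (Matrix.fromRows Hs Hd).mulVec (x + Δx)
      = Sum.elim (Hs.mulVec Δx) (Hd.mulVec x + Hd.mulVec Δx) := by
    rw [Matrix.fromRows_mulVec, Matrix.mulVec_add, Matrix.mulVec_add, hx, zero_add]
  have hA : hammingNorm ((Matrix.fromRows Hs Hd).mulVec (x + Δx))
      = hammingNorm (Hs.mulVec Δx) + hammingNorm (Hd.mulVec x + Hd.mulVec Δx) := by
    rw [hAdd, ham_sum_elim]
  have hexpΔ := hexp Δx hΔx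
  have hHΔ : hammingNorm ((Matrix.fromRows Hs Hd).mulVec Δx)
      = hammingNorm (Hs.mulVec Δx) + hammingNorm (Hd.mulVec Δx) := by
    rw [Matrix.fromRows_mulVec, ham_sum_elim]
  rw [hHΔ] at hexpΔ
  have htri := ham_rev_triangle (Hd.mulVec x) (Hd.mulVec Δx)
  have hle := ham_mulVec_le Hd hdisj Δx
  rw [hA, hBx]
  push_cast at hexpΔ ⊢
  have h1 : (hammingNorm (Hd.mulVec x) : ℝ)
      ≤ (hammingNorm (Hd.mulVec x + Hd.mulVec Δx) : ℝ) + hammingNorm (Hd.mulVec Δx) := by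
    exact_mod_cast htri
  have h2 : (hammingNorm (Hd.mulVec Δx) : ℝ) ≤ hammingNorm Δx := by exact_mod_cast hle
  linarith
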